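/- Let G be a group with an automatic structure L ⊆ A* for π₁ : A* → G, and let φ be an endomorphism of G whose kernel Ker(φ) is finite. Then L is an automatic structure for the composite homomorphism π₁p : A* → G/Ker(φ), where p : G → G/Ker(φ) is the canonical projection; in particular, G/Ker(φ) is an automatic group. -/

import Mathlib

open scoped NNReal

namespace Auto

/-- The generating set `Aπ ∪ (Aπ)⁻¹` of `G` determined by `π : A* → G`. -/
def gens {A G : Type*} [Group G] (π : FreeMonoid A →* G) : Set G :=
  (Set.range fun a : A => π (FreeMonoid.of a)) ∪
    Set.range fun a : A => (π (FreeMonoid.of a))⁻¹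

/-- The word metric `d_A` on `G`: the least `n` such that `g⁻¹h` is a product of `n`
elements of `Aπ ∪ (Aπ)⁻¹`. -/
noncomputable def wdist {A G : Type*} [Group G] (π : FreeMonoid A →* G) (g h : G) : ℕ :=
  sInf {n : ℕ | ∃ l : List G, l.length = n ∧ (∀ x ∈ l, x ∈ gens π) ∧ l.prod = g⁻¹ * h}

/-- Evaluation of a word of `A*` in `G`. -/
def evalW {A G : Type*} [Group G] (π : FreeMonoid A →* G) (w : List A) : G :=
  π (FreeMonoid.ofList w)

/-- `u` and `v` `p`-fellow travel: `d_A(u^[n]π, v^[n]π) ≤ p` for all `n`. -/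
def FellowTravel {A G : Type*} [Group G] (π : FreeMonoid A →* G) (p : ℝ≥0)
    (u v : List A) : Prop :=
  ∀ n : ℕ, (wdist π (evalW π (u.take n)) (evalW π (v.take n)) : ℝ≥0) ≤ p

/-- `u` and `v` are `p`-meeting-fellow-travellers. -/
def MFT {A G : Type*} [Group G] (π : FreeMonoid A →* G) (p : ℝ≥0) (u v : List A) : Prop :=
  FellowTravel π p u v ∧ evalW π u = evalW π v

/-- A language is regular if it is accepted by a finite-state automaton. -/
def IsRegular {A : Type*} (L : Language A) : Prop :=
  ∃ (σ : Type) (_ : Fintype σ) (M : DFA A σ), M.accepts = L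

/-- `L` is an automatic structure for `π`. -/
structure IsAutomaticStructure {A G : Type*} [Group G] (π : FreeMonoid A →* G)
    (L : Language A) : Prop where
  regular : IsRegular L
  onto : ∀ g : G, ∃ w ∈ L, evalW π w = g
  ft : ∃ N : ℕ, ∀ u ∈ L, ∀ v ∈ L,
    wdist π (evalW π u) (evalW π v) ≤ 1 → FellowTravel π N u v

/-- Evaluation of an element of `A ∪ {ε}`. -/
def evalOpt {A G : Type*} [Group G] (π : FreeMonoid A →* G) : Option A → G
  | none => 1
  | some a => π (FreeMonoid.of a)

/-- `L` is a biautomatic structure for `π`. -/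
structure IsBiautomaticStructure {A G : Type*} [Group G] (π : FreeMonoid A →* G)
    (L : Language A) extends IsAutomaticStructure π L : Prop where
  bi : ∃ N : ℕ, ∀ u ∈ L, ∀ v ∈ L, ∀ a : Option A,
    evalW π v = evalOpt π a * evalW π u →
    ∀ n : ℕ, wdist π (evalOpt π a * evalW π (u.take n)) (evalW π (v.take n)) ≤ N

/-- A language is factorial if it is closed under taking factors. -/
def IsFactorial {A : Type*} (L : Language A) : Prop :=
  ∀ u ∈ L, ∀ v : List A, v <:+: u → v ∈ L

/-- `D : ℝ≥0 → ℝ≥0` is a departure function for `(G, L)`. -/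
def IsDepartureFunction {A G : Type*} [Group G] (π : FreeMonoid A →* G) (L : Language A)
    (D : ℝ≥0 → ℝ≥0) : Prop :=
  ∀ w ∈ L, ∀ r : ℝ≥0, ∀ s t : ℕ, D r ≤ (t : ℝ≥0) → s + t ≤ w.length →
    r < (wdist π (evalW π (w.take s)) (evalW π (w.take (s + t))) : ℝ≥0)

/-- Every point of `S` is within distance `N` of `T`. -/
def NbhdIn {A G : Type*} [Group G] (π : FreeMonoid A →* G) (N : ℕ) (S T : Set G) : Prop :=
  ∀ s ∈ S, ∃ t ∈ T, wdist π s t ≤ N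

/-- The Hausdorff distance between `S` and `T` is at most `N`. -/
def HausdorffLE {A G : Type*} [Group G] (π : FreeMonoid A →* G) (N : ℕ)
    (S T : Set G) : Prop :=
  NbhdIn π N S T ∧ NbhdIn π N T S

/-- `H` is an `L`-quasiconvex subgroup of `G`. -/
def IsQuasiconvex {A G : Type*} [Group G] (π : FreeMonoid A →* G) (L : Language A)
    (H : Subgroup G) : Prop :=
  ∃ k : ℕ, ∀ h ∈ H, ∀ h' ∈ H, ∀ w ∈ L, h * evalW π w = h' →
    ∀ n : ℕ, ∃ z ∈ H, wdist π (h * evalW π (w.take n)) z ≤ k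

/-- The bounded reduction property for `(φ, L, L')`. -/
def BRP {A B G G' : Type*} [Group G] [Group G'] (π : FreeMonoid A →* G)
    (π' : FreeMonoid B →* G') (φ : G →* G') (L : Language A) (L' : Language B) : Prop :=
  ∃ N : ℕ, ∀ x : G, ∀ α ∈ L, ∀ β ∈ L', evalW π' β = φ (evalW π α) →
    HausdorffLE π' N (Set.range fun n : ℕ => φ (x * evalW π (α.take n)))
      (Set.range fun n : ℕ => φ x * evalW π' (β.take n))

/-- The synchronous bounded reduction property for `(φ, L, L')`. -/
def SyncBRP {A B G G' : Type*} [Group G] [Group G'] (π : FreeMonoid A →* G)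
    (π' : FreeMonoid B →* G') (φ : G →* G') (L : Language A) (L' : Language B) : Prop :=
  ∃ N : ℕ, ∀ x : G, ∀ α ∈ L, ∀ β ∈ L', evalW π' β = φ (evalW π α) →
    ∀ n : ℕ, wdist π' (φ (x * evalW π (α.take n))) (φ x * evalW π' (β.take n)) ≤ N

/-- The fellow traveller bounded reduction property (FT-BRP) for `(φ, L, L')`. -/
def FTBRP {A B G G' : Type*} [Group G] [Group G'] (π : FreeMonoid A →* G)
    (π' : FreeMonoid B →* G') (φ : G →* G') (L : Language A) (L' : Language B) : Prop :=
  ∀ p : ℝ≥0, ∃ q : ℝ≥0,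
    ∀ u₁ ∈ L, ∀ u₂ ∈ L, ∀ u₃ ∈ L, ∀ u₁' ∈ L', ∀ u₂' ∈ L', ∀ u₃' ∈ L',
      evalW π' u₁' = φ (evalW π u₁) → evalW π' u₂' = φ (evalW π u₂) →
        evalW π' u₃' = φ (evalW π u₃) →
          MFT π p (u₁ ++ u₂) u₃ → MFT π' q (u₁' ++ u₂') u₃'

/-- The natural homomorphism `(A ⊔ B)* → G` agreeing with `π₁` on `A` and `π₂` on `B`. -/
def sumHom {A B G : Type*} [Group G] (π₁ : FreeMonoid A →* G) (π₂ : FreeMonoid B →* G) :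
    FreeMonoid (A ⊕ B) →* G :=
  FreeMonoid.lift (Sum.elim (fun a => π₁ (FreeMonoid.of a)) fun b => π₂ (FreeMonoid.of b))

/-- The union `L₁ ∪ L₂` viewed as a language over `A ⊔ B`. -/
def unionLang {A B : Type*} (L₁ : Language A) (L₂ : Language B) : Language (A ⊕ B) :=
  {w : List (A ⊕ B) | (∃ u ∈ L₁, w = u.map Sum.inl) ∨ ∃ v ∈ L₂, w = v.map Sum.inr}

/-- `L` is an asynchronous automatic structure for `π`. -/
def IsAsyncAutomaticStructure {A G : Type*} [Group G] (π : FreeMonoid A →* G)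
    (L : Language A) : Prop :=
  IsRegular L ∧ (∀ g : G, ∃ w ∈ L, evalW π w = g) ∧
    ∃ p : ℕ, ∀ u ∈ L, ∀ v ∈ L, wdist π (evalW π u) (evalW π v) ≤ 1 →
      ∃ φ ψ : ℕ → ℕ, Monotone φ ∧ Monotone ψ ∧
        Function.Surjective φ ∧ Function.Surjective ψ ∧
          ∀ t : ℕ, wdist π (evalW π (u.take (φ t))) (evalW π (v.take (ψ t))) ≤ p

/-- `L₁` and `L₂` are equivalent automatic structures. -/
def LangEquivalent {A B G : Type*} [Group G] (π₁ : FreeMonoid A →* G)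
    (π₂ : FreeMonoid B →* G) (L₁ : Language A) (L₂ : Language B) : Prop :=
  IsAsyncAutomaticStructure (sumHom π₁ π₂) (unionLang L₁ L₂)

/-- `L₁` and `L₂` are synchronously equivalent automatic structures. -/
def LangSyncEquivalent {A B G : Type*} [Group G] (π₁ : FreeMonoid A →* G)
    (π₂ : FreeMonoid B →* G) (L₁ : Language A) (L₂ : Language B) : Prop :=
  IsAutomaticStructure (sumHom π₁ π₂) (unionLang L₁ L₂)

/-- `L` has the Hausdorff closeness property. -/
def HausClose {A G : Type*} [Group G] (π : FreeMonoid A →* G) (L : Language A) : Prop :=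
  ∃ N : ℕ, ∀ u ∈ L, ∀ v ∈ L, wdist π (evalW π u) (evalW π v) ≤ 1 →
    HausdorffLE π N (Set.range fun n : ℕ => evalW π (u.take n))
      (Set.range fun n : ℕ => evalW π (v.take n))

/-- The padded alphabet `C = (A×B) ∪ (A×{$}) ∪ ({$}×B)` of convolution. -/
abbrev ConvAlphabet (A B : Type*) := (A × B) ⊕ (A ⊕ B)

/-- The convolution `u ⋄ v` of two words. -/
def conv {A B : Type*} : List A → List B → List (ConvAlphabet A B)
  | [], [] => []
  | [], b :: v => Sum.inr (Sum.inr b) :: conv [] v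
  | a :: u, [] => Sum.inr (Sum.inl a) :: conv u []
  | a :: u, b :: v => Sum.inl (a, b) :: conv u v
  termination_by u v => u.length + v.length

/-- The convolution `L₁ ⋄ L₂` of two languages. -/
def convLang {A B : Type*} (L₁ : Language A) (L₂ : Language B) :
    Language (ConvAlphabet A B) :=
  {w : List (ConvAlphabet A B) | ∃ u ∈ L₁, ∃ v ∈ L₂, w = conv u v}

/-- The natural homomorphism `C* → G × G'` for the convolution alphabet. -/
def convHom {A B G G' : Type*} [Group G] [Group G'] (π₁ : FreeMonoid A →* G)
    (π₂ : FreeMonoid B →* G') : FreeMonoid (ConvAlphabet A B) →* G × G' :=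
  FreeMonoid.lift fun c =>
    match c with
    | Sum.inl (a, b) => (π₁ (FreeMonoid.of a), π₂ (FreeMonoid.of b))
    | Sum.inr (Sum.inl a) => (π₁ (FreeMonoid.of a), 1)
    | Sum.inr (Sum.inr b) => (1, π₂ (FreeMonoid.of b))

/-- A group is automatic if it admits an automatic structure over some finite alphabet. -/
def IsAutomaticGroup (G : Type*) [Group G] : Prop :=
  ∃ (A : Type) (_ : Fintype A) (π : FreeMonoid A →* G) (L : Language A),
    IsAutomaticStructure π L

end Auto

open Auto

section AuxQA

open Auto

variable {A G H : Type*} [Group G] [Group H]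

private lemma hom_eq_prodQA (π : FreeMonoid A →* G) (w : List A) :
    evalW π w = (w.map fun a => π (FreeMonoid.of a)).prod := by
  induction w with
  | nil => simp [evalW, FreeMonoid.ofList_nil]
  | cons a w ih => rw [evalW, FreeMonoid.ofList_cons, map_mul]; simp [← ih, evalW]

private lemma wdist_le_ofQA (π : FreeMonoid A →* G) {g h : G} {l : List G}
    (hg : ∀ x ∈ l, x ∈ gens π) (hp : l.prod = g⁻¹ * h) : wdist π g h ≤ l.length :=
  Nat.sInf_le ⟨l, rfl, hg, hp⟩

private lemma wdist_specQA {π : FreeMonoid A →* G} (hπ : Function.Surjective π) (g h : G) :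
    ∃ l : List G, l.length = wdist π g h ∧ (∀ x ∈ l, x ∈ gens π) ∧ l.prod = g⁻¹ * h := by
  have hne : {n : ℕ | ∃ l : List G, l.length = n ∧ (∀ x ∈ l, x ∈ gens π) ∧
      l.prod = g⁻¹ * h}.Nonempty := by
    obtain ⟨w, hw⟩ := hπ (g⁻¹ * h)
    refine ⟨_, w.toList.map fun a => π (FreeMonoid.of a), rfl, ?_, ?_⟩
    · intro x hx
      simp only [List.mem_map] at hx
      obtain ⟨a, _, rfl⟩ := hx
      exact Or.inl ⟨a, rfl⟩
    · rw [← hom_eq_prodQA π w.toList]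
      simpa [evalW, FreeMonoid.ofList_toList] using hw
  exact Nat.sInf_mem hne

private lemma wdist_triangleQA {π : FreeMonoid A →* G} (hπ : Function.Surjective π)
    (g h k : G) : wdist π g k ≤ wdist π g h + wdist π h k := by
  obtain ⟨l₁, h1, hg1, hp1⟩ := wdist_specQA hπ g h
  obtain ⟨l₂, h2, hg2, hp2⟩ := wdist_specQA hπ h k
  calc wdist π g k ≤ (l₁ ++ l₂).length := by
        refine wdist_le_ofQA π ?_ ?_
        · intro x hx; rcases List.mem_append.1 hx with h | h
          exacts [hg1 x h, hg2 x h]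
        · rw [List.prod_append, hp1, hp2]; group
    _ = _ := by rw [List.length_append, h1, h2]

private lemma wdist_invQA (π : FreeMonoid A →* G) (g h : G) :
    wdist π g h = wdist π 1 (g⁻¹ * h) := by
  simp [wdist]

private lemma gens_comp_memQA (p : G →* H) (π : FreeMonoid A →* G) {x : G}
    (hx : x ∈ gens π) : p x ∈ gens (p.comp π) := by
  rcases hx with ⟨a, rfl⟩ | ⟨a, rfl⟩
  · exact Or.inl ⟨a, rfl⟩
  · exact Or.inr ⟨a, by simp⟩

private lemma gens_comp_surjQA (p : G →* H) (π : FreeMonoid A →* G) {x : H}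
    (hx : x ∈ gens (p.comp π)) : ∃ z ∈ gens π, p z = x := by
  rcases hx with ⟨a, rfl⟩ | ⟨a, rfl⟩
  · exact ⟨π (FreeMonoid.of a), Or.inl ⟨a, rfl⟩, rfl⟩
  · exact ⟨(π (FreeMonoid.of a))⁻¹, Or.inr ⟨a, rfl⟩, by simp⟩

private lemma wdist_comp_leQA {π : FreeMonoid A →* G} (hπ : Function.Surjective π)
    (p : G →* H) (g h : G) :
    wdist (p.comp π) (p g) (p h) ≤ wdist π g h := by
  obtain ⟨l, hlen, hg, hp⟩ := wdist_specQA hπ g h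
  have := wdist_le_ofQA (p.comp π) (g := p g) (h := p h) (l := l.map p)
    (fun x hx => by
      simp only [List.mem_map] at hx; obtain ⟨y, hy, rfl⟩ := hx
      exact gens_comp_memQA p π (hg y hy))
    (by rw [← map_list_prod p l, hp]; simp)
  simpa [hlen] using this

/-- chain lemma: elements at distance `m+1` fellow travel with constant `(m+1)*N`. -/
private lemma chainQA {π : FreeMonoid A →* G} (hπ : Function.Surjective π)
    {L : Language A} (onto : ∀ g : G, ∃ w ∈ L, evalW π w = g) {N : ℕ}
    (hft : ∀ u ∈ L, ∀ v ∈ L, wdist π (evalW π u) (evalW π v) ≤ 1 → FellowTravel π N u v)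
    (m : ℕ) : ∀ u ∈ L, ∀ v ∈ L, wdist π (evalW π u) (evalW π v) ≤ m + 1 →
      ∀ n : ℕ, wdist π (evalW π (u.take n)) (evalW π (v.take n)) ≤ (m + 1) * N := by
  induction m with
  | zero =>
    intro u hu v hv hd n
    have := hft u hu v hv hd n
    have := (by exact_mod_cast this :
      wdist π (evalW π (u.take n)) (evalW π (v.take n)) ≤ N)
    omega
  | succ m ih =>
    intro u hu v hv hd n
    by_cases hle : wdist π (evalW π u) (evalW π v) ≤ m + 1
    · exact le_trans (ih u hu v hv hle n) (Nat.mul_le_mul_right N (by omega))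
    · have heq : wdist π (evalW π u) (evalW π v) = m + 2 := le_antisymm hd (by omega)
      obtain ⟨l, hlen, hgl, hpl⟩ := wdist_specQA hπ (evalW π u) (evalW π v)
      rw [heq] at hlen
      cases l with
      | nil => simp at hlen
      | cons x l' =>
        obtain ⟨w, hw, hew⟩ := onto (evalW π u * x)
        have h1 : wdist π (evalW π u) (evalW π w) ≤ 1 := by
          rw [hew]
          have := wdist_le_ofQA π (g := evalW π u) (h := evalW π u * x) (l := [x])
            (by intro y hy; simp only [List.mem_singleton] at hy; rw [hy]
                exact hgl x List.mem_cons_self)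
            (by simp)
          simpa using this
        have h2 : wdist π (evalW π w) (evalW π v) ≤ m + 1 := by
          rw [hew]
          have hx : l'.prod = (evalW π u * x)⁻¹ * evalW π v := by
            have : x * l'.prod = (evalW π u)⁻¹ * evalW π v := by
              simpa using hpl
            rw [mul_inv_rev]
            rw [mul_assoc, ← this]
            group
          have := wdist_le_ofQA π (g := evalW π u * x) (h := evalW π v) (l := l')
            (fun y hy => hgl y (List.mem_cons_of_mem x hy)) hx
          simp only [List.length_cons, Nat.succ_inj] at hlen
          omega
        have h3 := hft u hu w hw h1 n
        have h3' := (by exact_mod_cast h3 :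
          wdist π (evalW π (u.take n)) (evalW π (w.take n)) ≤ N)
        have h4 := ih w hw v hv h2 n
        have h5 := wdist_triangleQA hπ (evalW π (u.take n)) (evalW π (w.take n))
          (evalW π (v.take n))
        have : (m + 1 + 1) * N = N + (m + 1) * N := by ring
        omega

/-- transport of an automatic structure along a bijection of alphabets, to get
an `IsAutomaticGroup` witness in `Type 0`. -/
private lemma transportQA {A : Type*} [Fintype A] {G : Type*} [Group G]
    (π : FreeMonoid A →* G) (L : Language A) (h : IsAutomaticStructure π L) :
    IsAutomaticGroup G := by
  classical
  set n := Fintype.card A with hn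
  set e : Fin n ≃ A := (Fintype.equivFin A).symm with he
  set π' : FreeMonoid (Fin n) →* G := π.comp (FreeMonoid.map ⇑e) with hπ'
  set L' : Language (Fin n) := {w : List (Fin n) | w.map ⇑e ∈ L} with hL'
  have hev : ∀ w : List (Fin n), evalW π' w = evalW π (w.map ⇑e) := fun w => rfl
  have hg1 : (Set.range fun a : Fin n => π' (FreeMonoid.of a)) =
      Set.range fun a : A => π (FreeMonoid.of a) := by
    have : (fun a : Fin n => π' (FreeMonoid.of a)) =
        (fun a : A => π (FreeMonoid.of a)) ∘ ⇑e := rfl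
    rw [this]
    exact e.surjective.range_comp _
  have hgens : gens π' = gens π := by
    unfold gens
    rw [hg1]
    congr 1
    have : (fun a : Fin n => (π' (FreeMonoid.of a))⁻¹) =
        (fun a : A => (π (FreeMonoid.of a))⁻¹) ∘ ⇑e := rfl
    rw [this]
    exact e.surjective.range_comp _
  have hwd : ∀ g h : G, wdist π' g h = wdist π g h := by
    intro g h; simp only [wdist, hgens]
  refine ⟨Fin n, inferInstance, π', L', ?_, ?_, ?_⟩
  · -- regular
    obtain ⟨σ, fσ, M, hM⟩ := h.regular
    refine ⟨σ, fσ, ⟨fun s a => M.step s (e a), M.start, M.accept⟩, ?_⟩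
    ext w
    have hef : ∀ (s : σ) (w : List (Fin n)),
        DFA.evalFrom ⟨fun s a => M.step s (e a), M.start, M.accept⟩ s w
          = M.evalFrom s (w.map ⇑e) := by
      intro s w
      simp [DFA.evalFrom, List.foldl_map]
    rw [DFA.mem_accepts]
    change _ ↔ w.map ⇑e ∈ L
    rw [← hM, DFA.mem_accepts]
    simp only [DFA.eval]
    rw [hef]
  · -- onto
    intro g
    obtain ⟨w, hw, hew⟩ := h.onto g
    refine ⟨w.map ⇑e.symm, ?_, ?_⟩
    · show (w.map ⇑e.symm).map ⇑e ∈ L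
      simpa [List.map_map] using hw
    · rw [hev]
      simpa [List.map_map] using hew
  · -- ft
    obtain ⟨N, hN⟩ := h.ft
    refine ⟨N, fun u hu v hv hd => ?_⟩
    have hd' : wdist π (evalW π (u.map ⇑e)) (evalW π (v.map ⇑e)) ≤ 1 := by
      rw [← hev, ← hev, ← hwd]; exact hd
    have := hN (u.map ⇑e) hu (v.map ⇑e) hv hd'
    intro m
    have h2 := this m
    rw [← List.map_take, ← List.map_take, ← hev, ← hev, ← hwd] at h2
    exact h2

end AuxQA

/-- If `L` is an automatic structure for `π₁ : A* → G` and `φ` is an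
endomorphism of `G` with finite kernel, then `L` is an automatic structure for the
composite `π₁p : A* → G/Ker(φ)`; in particular `G/Ker(φ)` is an automatic group. -/
theorem quotient_automatic {A G : Type*} [Fintype A] [Group G]
    (π₁ : FreeMonoid A →* G) (hπ₁ : Function.Surjective π₁)
    (L : Language A) (hL : IsAutomaticStructure π₁ L)
    (φ : G →* G) (hker : (φ.ker : Set G).Finite) :
    IsAutomaticStructure ((QuotientGroup.mk' φ.ker).comp π₁) L ∧
      IsAutomaticGroup (G ⧸ φ.ker) := by
  classical
  set p : G →* G ⧸ φ.ker := QuotientGroup.mk' φ.ker with hp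
  set π₂ : FreeMonoid A →* G ⧸ φ.ker := p.comp π₁ with hπ₂def
  have hpsurj : Function.Surjective p := QuotientGroup.mk'_surjective φ.ker
  have hπ₂ : Function.Surjective π₂ := by
    rw [hπ₂def]; rw [MonoidHom.coe_comp]; exact hpsurj.comp hπ₁
  have hee : ∀ w : List A, evalW π₂ w = p (evalW π₁ w) := fun w => rfl
  set C : ℕ := hker.toFinset.sup fun k => wdist π₁ 1 k with hC
  have hsup : ∀ k ∈ φ.ker, wdist π₁ 1 k ≤ C := fun k hk =>
    Finset.le_sup (hker.mem_toFinset.2 hk)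
  have hbound : ∀ g h : G, wdist π₂ (p g) (p h) ≤ 1 → wdist π₁ g h ≤ C + 1 := by
    intro g h hd
    obtain ⟨l, hlen, hgl, hpl⟩ := wdist_specQA hπ₂ (p g) (p h)
    have hl1 : l.length ≤ 1 := by omega
    match l, hl1, hgl, hpl with
    | [], _, hgl, hpl =>
      have hk : g⁻¹ * h ∈ φ.ker := by
        have : p (g⁻¹ * h) = 1 := by
          simp only [List.prod_nil] at hpl
          rw [map_mul, map_inv, ← hpl]
        exact (QuotientGroup.eq_one_iff (g⁻¹ * h)).1 this
      rw [wdist_invQA]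
      exact le_trans (hsup _ hk) (Nat.le_succ C)
    | [x], _, hgl, hpl =>
      obtain ⟨z, hz, hpz⟩ := gens_comp_surjQA p π₁ (hgl x (List.mem_singleton_self x))
      simp only [List.prod_cons, List.prod_nil, mul_one] at hpl
      have hk : z⁻¹ * (g⁻¹ * h) ∈ φ.ker := by
        have : p (z⁻¹ * (g⁻¹ * h)) = 1 := by
          rw [map_mul, map_inv, hpz, map_mul, map_inv, ← hpl]
          group
        exact (QuotientGroup.eq_one_iff (z⁻¹ * (g⁻¹ * h))).1 this
      have h1 : wdist π₁ g (g * z) ≤ 1 := by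
        have := wdist_le_ofQA π₁ (g := g) (h := g * z) (l := [z])
          (by intro y hy; simp only [List.mem_singleton] at hy; subst hy; exact hz)
          (by simp)
        simpa using this
      have h2 : wdist π₁ (g * z) h ≤ C := by
        rw [wdist_invQA]
        have : (g * z)⁻¹ * h = z⁻¹ * (g⁻¹ * h) := by group
        rw [this]
        exact hsup _ hk
      have := wdist_triangleQA hπ₁ g (g * z) h
      omega
    | x :: y :: l', hl1', _, _ => simp at hl1'
  obtain ⟨N, hN⟩ := hL.ft
  have hstruct : IsAutomaticStructure π₂ L := by
    refine ⟨hL.regular, ?_, ?_⟩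
    · intro g
      obtain ⟨g', rfl⟩ := hpsurj g
      obtain ⟨w, hw, hew⟩ := hL.onto g'
      exact ⟨w, hw, by rw [hee, hew]⟩
    · refine ⟨(C + 1) * N, fun u hu v hv hd => ?_⟩
      have hd' : wdist π₁ (evalW π₁ u) (evalW π₁ v) ≤ C + 1 := by
        apply hbound
        rw [← hee, ← hee]; exact hd
      have hchain := chainQA hπ₁ hL.onto hN C u hu v hv hd'
      intro m
      have h1 := hchain m
      have h2 := wdist_comp_leQA hπ₁ p (evalW π₁ (List.take m u)) (evalW π₁ (List.take m v))
      rw [← hπ₂def, ← hee, ← hee] at h2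
      exact_mod_cast le_trans h2 h1
  exact ⟨hstruct, transportQA π₂ L hstruct⟩
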